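/- For any w ∈ ℝ^L and any ε > 0, argmax^ε(w) ⊆ s_margin^ε(w); that is, the inflated argmax set is always contained in the fixed-margin selection set. -/

import Mathlib

noncomputable section

/-- The set `R_j^ε = {w ∈ ℝ^L : w_j ≥ max_{ℓ≠j} w_ℓ + ε/√2}`. -/
def Rset (L : ℕ) (ε : ℝ) (j : Fin L) : Set (EuclideanSpace ℝ (Fin L)) :=
  {w | ∀ ℓ : Fin L, ℓ ≠ j → w ℓ + ε / Real.sqrt 2 ≤ w j}

/-- The inflated argmax: `argmax^ε(w) = {j ∈ [L] : dist(w, R_j^ε) < ε}`. -/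
def inflatedArgmax (L : ℕ) (ε : ℝ) (w : EuclideanSpace ℝ (Fin L)) : Set (Fin L) :=
  {j | Metric.infDist w (Rset L ε j) < ε}

/-- The fixed-margin selection rule
`s_margin^ε(w) = {j ∈ [L] : w_j > max_{ℓ∈[L]} w_ℓ − ε/√2}`. -/
def smargin (L : ℕ) (ε : ℝ) (w : EuclideanSpace ℝ (Fin L)) : Set (Fin L) :=
  {j | ∀ ℓ : Fin L, w ℓ - ε / Real.sqrt 2 < w j}

/-- The inflated argmax set is always contained in the fixed-margin selection set. -/
theorem inflatedArgmax_subset_smargin (L : ℕ) (hL : 2 ≤ L) (ε : ℝ) (hε : 0 < ε)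
    (w : EuclideanSpace ℝ (Fin L)) :
    inflatedArgmax L ε w ⊆ smargin L ε w := by
  intro j hj ℓ
  have hs2 : (0:ℝ) < Real.sqrt 2 := Real.sqrt_pos.2 (by norm_num)
  have hs2sq : Real.sqrt 2 ^ 2 = 2 := Real.sq_sqrt (by norm_num)
  by_cases hlj : ℓ = j
  · subst hlj
    have : 0 < ε / Real.sqrt 2 := div_pos hε hs2
    linarith
  · -- Rset is nonempty
    have hne : (Rset L ε j).Nonempty := by
      refine ⟨WithLp.toLp 2 (fun i => if i = j then ε / Real.sqrt 2 else 0), ?_⟩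
      intro k hk
      simp [hk]
    obtain ⟨v, hv, hdist⟩ := (Metric.infDist_lt_iff hne).1 hj
    have hvj : v ℓ + ε / Real.sqrt 2 ≤ v j := hv ℓ hlj
    -- distance bound on the two coordinates
    have hd : dist w v ^ 2 < ε ^ 2 := by
      have h0 : 0 ≤ dist w v := dist_nonneg
      nlinarith
    have hsum : (w ℓ - v ℓ) ^ 2 + (w j - v j) ^ 2 ≤ dist w v ^ 2 := by
      rw [EuclideanSpace.dist_eq, Real.sq_sqrt (by positivity)]
      have := Finset.sum_le_sum_of_subset_of_nonneg
        (s := ({ℓ, j} : Finset (Fin L))) (t := Finset.univ)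
        (f := fun i => dist (w i) (v i) ^ 2)
        (Finset.subset_univ _) (fun i _ _ => by positivity)
      rw [Finset.sum_pair hlj] at this
      calc (w ℓ - v ℓ) ^ 2 + (w j - v j) ^ 2
          = dist (w ℓ) (v ℓ) ^ 2 + dist (w j) (v j) ^ 2 := by
            rw [Real.dist_eq, Real.dist_eq, sq_abs, sq_abs]
        _ ≤ _ := this
    set a := w ℓ - v ℓ
    set b := v j - w j
    have hab : a ^ 2 + b ^ 2 < ε ^ 2 := by
      have : (w j - v j) ^ 2 = b ^ 2 := by ring
      nlinarith
    -- a + b < √2 * ε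
    have habs : a + b < Real.sqrt 2 * ε := by
      nlinarith [sq_nonneg (a - b), sq_nonneg (a + b), mul_pos hs2 hε]
    -- conclude
    have key : w ℓ - w j < Real.sqrt 2 * ε - ε / Real.sqrt 2 := by
      have : w ℓ - w j = a + b + (v ℓ - v j) := by ring
      linarith
    have heq : Real.sqrt 2 * ε - ε / Real.sqrt 2 = ε / Real.sqrt 2 := by
      field_simp
      nlinarith
    linarith [heq ▸ key]
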